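/- Fix η ∈ (2, 3) and let ψ(x) = (1 − η)x + ηx³ be the gradient descent map with step size η on f_−(x) = x²/2 − x⁴/4. Let c = √((η − 2)/η). Then c > 0, ψ(c) = −c and ψ(−c) = c, so {c, −c} is a period-2 cycle of ψ, and the derivative of ψ∘ψ at c equals (2η − 5)², which is strictly less than 1; hence the cycle is linearly stable. -/

import Mathlib

/-- **Explicit stable period-2 cycle of GD on `f₋(x) = x²/2 - x⁴/4` for `η ∈ (2,3)`.**
The GD map is `ψ(x) = (1 - η) x + η x³`. With `c = √((η-2)/η)` we have `c > 0`,
`ψ(c) = -c`, `ψ(-c) = c` (a period-2 cycle), and `(ψ ∘ ψ)'(c) = (2η - 5)² < 1`,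
so the cycle is linearly stable. -/
theorem stmt10 (η : ℝ) (hη1 : 2 < η) (hη2 : η < 3) :
    let ψ : ℝ → ℝ := fun x => (1 - η) * x + η * x ^ 3
    let c : ℝ := Real.sqrt ((η - 2) / η)
    0 < c ∧ ψ c = -c ∧ ψ (-c) = c ∧
      deriv (ψ ∘ ψ) c = (2 * η - 5) ^ 2 ∧ (2 * η - 5) ^ 2 < 1 := by
  intro ψ c
  have hηpos : (0:ℝ) < η := by linarith
  have harg : (0:ℝ) < (η - 2) / η := div_pos (by linarith) hηpos
  have hc : 0 < c := Real.sqrt_pos.mpr harg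
  have hc2 : c ^ 2 = (η - 2) / η := Real.sq_sqrt harg.le
  have hηc2 : η * c ^ 2 = η - 2 := by
    rw [hc2]; field_simp
  have hψc : ψ c = -c := by
    show (1 - η) * c + η * c ^ 3 = -c
    have : η * c ^ 3 = (η - 2) * c := by
      rw [show c ^ 3 = c ^ 2 * c by ring, ← mul_assoc, hηc2]
    rw [this]; ring
  have hψnc : ψ (-c) = c := by
    show (1 - η) * (-c) + η * (-c) ^ 3 = c
    have : η * (-c) ^ 3 = -((η - 2) * c) := by
      rw [show (-c) ^ 3 = -(c ^ 2 * c) by ring, mul_neg, ← mul_assoc, hηc2]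
    rw [this]; ring
  have hderivψ : ∀ x : ℝ, HasDerivAt ψ ((1 - η) + η * (3 * x ^ 2)) x := by
    intro x
    have h1 : HasDerivAt (fun x : ℝ => (1 - η) * x) (1 - η) x := by
      simpa using (hasDerivAt_id x).const_mul (1 - η)
    have h2 : HasDerivAt (fun x : ℝ => η * x ^ 3) (η * (3 * x ^ 2)) x := by
      simpa using ((hasDerivAt_pow 3 x).const_mul η)
    have h3 := h1.add h2
    exact h3
  have hcomp : HasDerivAt (ψ ∘ ψ) (((1 - η) + η * (3 * (ψ c) ^ 2)) * ((1 - η) + η * (3 * c ^ 2))) c :=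
    (hderivψ (ψ c)).comp c (hderivψ c)
  have hval : ((1 - η) + η * (3 * (ψ c) ^ 2)) * ((1 - η) + η * (3 * c ^ 2)) = (2 * η - 5) ^ 2 := by
    rw [hψc, neg_pow]
    have : (1 - η) + η * (3 * c ^ 2) = 2 * η - 5 := by
      have : η * (3 * c ^ 2) = 3 * (η * c ^ 2) := by ring
      rw [this, hηc2]; ring
    simp only [neg_one_pow_eq_one_iff_even, show ((-1:ℝ))^2 = 1 by norm_num, one_mul]
    rw [this]; ring
  refine ⟨hc, hψc, hψnc, ?_, ?_⟩
  · rw [hcomp.deriv, hval]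
  · have h1 : -1 < 2 * η - 5 := by linarith
    have h2 : 2 * η - 5 < 1 := by linarith
    nlinarith
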